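/- Every empty 6-circuit whose spanning 6-face f_e neighbours 6 pairwise different faces has exactly 6 vertices and at least 13 edges. -/

import Mathlib

/-- A combinatorial map (connected graph cellularly embedded in an orientable surface),
given by a set of darts `D`, the edge involution `σ` and the rotation `ρ`. -/
structure CombMap where
  D : Type
  fin : Finite D
  σ : Equiv.Perm D
  ρ : Equiv.Perm D
  σ_invol : ∀ d, σ (σ d) = d
  σ_fixfree : ∀ d, σ d ≠ d
  conn : ∀ d d' : D, ∃ g ∈ Subgroup.closure ({σ, ρ} : Set (Equiv.Perm D)), g d = d'

attribute [instance] CombMap.fin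

namespace CombMap

variable (M : CombMap)

/-- The face permutation. -/
def φ : Equiv.Perm M.D := M.ρ * M.σ

def vSetoid : Setoid M.D :=
  ⟨M.ρ.SameCycle, ⟨fun _ => Equiv.Perm.SameCycle.refl _ _,
    Equiv.Perm.SameCycle.symm, Equiv.Perm.SameCycle.trans⟩⟩

def eSetoid : Setoid M.D :=
  ⟨M.σ.SameCycle, ⟨fun _ => Equiv.Perm.SameCycle.refl _ _,
    Equiv.Perm.SameCycle.symm, Equiv.Perm.SameCycle.trans⟩⟩

def fSetoid : Setoid M.D :=
  ⟨M.φ.SameCycle, ⟨fun _ => Equiv.Perm.SameCycle.refl _ _,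
    Equiv.Perm.SameCycle.symm, Equiv.Perm.SameCycle.trans⟩⟩

/-- Vertices are orbits of `ρ`. -/
def Vertex := Quotient M.vSetoid
/-- Edges are orbits of `σ`. -/
def Edge := Quotient M.eSetoid
/-- Faces are orbits of `φ`. -/
def Face := Quotient M.fSetoid

instance : Finite M.Vertex := Quotient.finite _
instance : Finite M.Edge := Quotient.finite _
instance : Finite M.Face := Quotient.finite _

def vtx (d : M.D) : M.Vertex := Quotient.mk M.vSetoid d
def edg (d : M.D) : M.Edge := Quotient.mk M.eSetoid d
def fce (d : M.D) : M.Face := Quotient.mk M.fSetoid d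

noncomputable def nV : ℕ := Nat.card M.Vertex
noncomputable def nE : ℕ := Nat.card M.Edge
noncomputable def nF : ℕ := Nat.card M.Face

/-- The size of a face: the length of its facial walk, i.e. the number of darts in it. -/
noncomputable def faceSize (f : M.Face) : ℕ := Nat.card {d : M.D // M.fce d = f}

/-- The degree of a vertex: the number of darts emanating from it. -/
noncomputable def degree (v : M.Vertex) : ℕ := Nat.card {d : M.D // M.vtx d = v}

/-- The face excess `Σ_f (d(f) - 3)`. -/
noncomputable def faceExcess : ℤ := ∑ᶠ f : M.Face, ((M.faceSize f : ℤ) - 3)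

/-- The underlying graph of the map is simple: no loops, no multiple edges. -/
def Simple : Prop :=
  (∀ d, M.vtx d ≠ M.vtx (M.σ d)) ∧
  ∀ d d', M.vtx d = M.vtx d' → M.vtx (M.σ d) = M.vtx (M.σ d') → M.edg d = M.edg d'

/-- The dual has no loops. -/
def DualLoopFree : Prop := ∀ d, M.fce d ≠ M.fce (M.σ d)

/-- The dual is simple: no loops and no multiple edges. -/
def DualSimple : Prop :=
  M.DualLoopFree ∧
  ∀ d d', M.fce d = M.fce d' → M.fce (M.σ d) = M.fce (M.σ d') → M.edg d = M.edg d'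

/-- The underlying simple graph on the vertices of the map. -/
def graph : SimpleGraph M.Vertex :=
  SimpleGraph.fromRel (fun a b => ∃ d, M.vtx d = a ∧ M.vtx (M.σ d) = b)

/-- The underlying simple graph of the dual map, on the faces of the map. -/
def dualGraph : SimpleGraph M.Face :=
  SimpleGraph.fromRel (fun a b => ∃ d, M.fce d = a ∧ M.fce (M.σ d) = b)

/-- Vertex `v` lies on the face `f`. -/
def VertexOnFace (v : M.Vertex) (f : M.Face) : Prop := ∃ d, M.fce d = f ∧ M.vtx d = v

/-- Faces `f` and `f'` share an edge. -/
def FaceAdj (f f' : M.Face) : Prop := ∃ d, M.fce d = f ∧ M.fce (M.σ d) = f'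

end CombMap

/-- `k`-connectivity of a graph: more than `k` vertices, and removing fewer than `k`
vertices never disconnects it. -/
def KConn {α : Type} (H : SimpleGraph α) (k : ℕ) : Prop :=
  k < Nat.card α ∧ ∀ S : Set α, S.ncard < k → (H.induce Sᶜ).Connected

namespace CombMap

variable (M : CombMap)

/-- An empty `k`-circuit: a map on at most `k` vertices with a spanning face `f_e` of
size `k`, whose underlying graph is simple, whose dual has no loops, and all of whose
dual multi-edges are incident with `f_e`. -/
def IsEmptyCircuit (k : ℕ) (fe : M.Face) : Prop :=
  M.nV ≤ k ∧ M.faceSize fe = k ∧ (∀ v : M.Vertex, M.VertexOnFace v fe) ∧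
  M.Simple ∧ M.DualLoopFree ∧
  ∀ d d', M.fce d = M.fce d' → M.fce (M.σ d) = M.fce (M.σ d') → M.edg d ≠ M.edg d' →
    (M.fce d = fe ∨ M.fce (M.σ d) = fe)

/-- An empty `k`-pair: a map on at most `k` vertices with two spanning faces
`f_e, f_e'` with `d(f_e)+d(f_e') = k` not sharing an edge, whose underlying graph is
simple, whose dual has no loops, and all of whose dual multi-edges are incident with
`f_e` or `f_e'`. -/
def IsEmptyPair (k : ℕ) (fe fe' : M.Face) : Prop :=
  M.nV ≤ k ∧ fe ≠ fe' ∧ M.faceSize fe + M.faceSize fe' = k ∧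
  (∀ v : M.Vertex, M.VertexOnFace v fe ∨ M.VertexOnFace v fe') ∧
  ¬ M.FaceAdj fe fe' ∧
  M.Simple ∧ M.DualLoopFree ∧
  ∀ d d', M.fce d = M.fce d' → M.fce (M.σ d) = M.fce (M.σ d') → M.edg d ≠ M.edg d' →
    (M.fce d = fe ∨ M.fce d = fe' ∨ M.fce (M.σ d) = fe ∨ M.fce (M.σ d) = fe')

end CombMap

set_option linter.unusedSectionVars false
set_option linter.unusedVariables false

namespace SixCircuitAux

open Equiv Equiv.Perm Relation

variable {α : Type} [Finite α]

def scSetoid (g : Perm α) : Setoid α :=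
  ⟨g.SameCycle, ⟨fun _ => Equiv.Perm.SameCycle.refl _ _,
    Equiv.Perm.SameCycle.symm, Equiv.Perm.SameCycle.trans⟩⟩

noncomputable def cyc (g : Perm α) : ℕ := Nat.card (Quotient (scSetoid g))

theorem card_ne (b : α) : Nat.card α = Nat.card {x : α // x ≠ b} + 1 := by
  classical
  cases nonempty_fintype α
  rw [Nat.card_eq_fintype_card, Nat.card_eq_fintype_card,
    ← Fintype.card_congr (Equiv.sumCompl (· = b))]
  rw [Fintype.card_sum, Fintype.card_subtype_eq, add_comm]

theorem add1 {s t : Setoid α} {a b : α}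
    (h1 : ∀ x y, s.r x y → t.r x y)
    (h2 : ¬ s.r a b) (h3 : t.r a b)
    (h4 : ∀ x y, t.r x y → s.r x y ∨ (s.r x a ∧ s.r y b) ∨ (s.r x b ∧ s.r y a)) :
    Nat.card (Quotient s) = Nat.card (Quotient t) + 1 := by
  classical
  let π : Quotient s → Quotient t :=
    Quotient.lift (fun x => Quotient.mk t x) (fun x y h => Quotient.sound (h1 x y h))
  let f : {c : Quotient s // c ≠ Quotient.mk s b} → Quotient t := fun c => π c.1
  have hbij : Function.Bijective f := by
    constructor
    · rintro ⟨c1, hc1⟩ ⟨c2, hc2⟩ h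
      induction c1 using Quotient.ind
      induction c2 using Quotient.ind
      rename_i x y
      have hxy : t.r x y := Quotient.exact h
      rcases h4 x y hxy with h' | ⟨h5, h6⟩ | ⟨h5, h6⟩
      · exact Subtype.ext (Quotient.sound h')
      · exact absurd (Quotient.sound h6) hc2
      · exact absurd (Quotient.sound h5) hc1
    · intro c
      induction c using Quotient.ind
      rename_i x
      by_cases hbx : s.r b x
      · refine ⟨⟨Quotient.mk s a, fun h => h2 (Quotient.exact h)⟩, ?_⟩
        show Quotient.mk t a = Quotient.mk t x
        exact Quotient.sound (t.iseqv.trans h3 (h1 _ _ hbx))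
      · exact ⟨⟨Quotient.mk s x, fun h => hbx (s.iseqv.symm (Quotient.exact h))⟩, rfl⟩
  rw [card_ne (Quotient.mk s b), Nat.card_eq_of_bijective f hbij]

omit [Finite α] in
/-- closure of a predicate under iterates of a permutation -/
theorem zpow_closure (h : Perm α) (R : α → Prop)
    (hstep : ∀ z, R z → R (h z)) (hstep' : ∀ z, R z → R (h⁻¹ z)) (x : α) (hx : R x) :
    ∀ i : ℤ, R ((h ^ i) x) := by
  intro i
  induction i using Int.induction_on with
  | zero => simpa using hx
  | succ k ih =>
    have : (h ^ ((k : ℤ) + 1)) x = h ((h ^ (k : ℤ)) x) := by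
      rw [add_comm, zpow_add, zpow_one, mul_apply]
    rw [this]; exact hstep _ ih
  | pred k ih =>
    have : (h ^ (-(k : ℤ) - 1)) x = h⁻¹ ((h ^ (-(k : ℤ))) x) := by
      rw [sub_eq_add_neg, add_comm, zpow_add, zpow_neg_one, mul_apply]
    rw [this]; exact hstep' _ ih


section Swap

variable [DecidableEq α] {g : Perm α} {a b : α}

/-- K1: if a,b same cycle of g, orbits of `swap a b * g` refine those of `g`. -/
theorem sc_of_swapMul (hab : g.SameCycle a b) {x y : α}
    (h : (swap a b * g).SameCycle x y) : g.SameCycle x y := by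
  have key : ∀ z : α, g.SameCycle z ((swap a b * g) z) := by
    intro z
    have hz : g.SameCycle z (g z) := ⟨1, by simp⟩
    rcases eq_or_ne (g z) a with h1 | h1
    · have : (swap a b * g) z = b := by simp [mul_apply, h1]
      rw [this]; exact (h1 ▸ hz).trans hab
    rcases eq_or_ne (g z) b with h2 | h2
    · have : (swap a b * g) z = a := by simp [mul_apply, h2]
      rw [this]; exact (h2 ▸ hz).trans hab.symm
    · have : (swap a b * g) z = g z := by simp [mul_apply, swap_apply_of_ne_of_ne h1 h2]
      rw [this]; exact hz
  obtain ⟨i, hi⟩ := h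
  rw [← hi]
  exact zpow_closure (swap a b * g) (g.SameCycle x)
    (fun z hz => hz.trans (key z))
    (fun z hz => by
      have h2 := key ((swap a b * g)⁻¹ z)
      rw [show ∀ (e : Equiv.Perm _) y, e (e⁻¹ y) = y from fun e y => e.apply_symm_apply y] at h2
      exact hz.trans h2.symm) x (Equiv.Perm.SameCycle.refl _ _) i

/-- K5: orbits not containing a nor b are unchanged. -/
theorem sc_swapMul_of_sc {x : α} (hax : ¬ g.SameCycle a x) (hbx : ¬ g.SameCycle b x) {y : α}
    (hxy : g.SameCycle x y) : (swap a b * g).SameCycle x y := by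
  set h := swap a b * g with hh
  have main : ∀ i : ℤ, g.SameCycle x ((g ^ i) x) ∧ h.SameCycle x ((g ^ i) x) := by
    refine zpow_closure g (fun z => g.SameCycle x z ∧ h.SameCycle x z) ?_ ?_ x
      ⟨Equiv.Perm.SameCycle.refl _ _, Equiv.Perm.SameCycle.refl _ _⟩
    · rintro z ⟨hz1, hz2⟩
      have hga : g z ≠ a := fun he =>
        hax (Equiv.Perm.SameCycle.symm (he ▸ (hz1.trans ⟨1, by simp⟩)))
      have hgb : g z ≠ b := fun he =>
        hbx (Equiv.Perm.SameCycle.symm (he ▸ (hz1.trans ⟨1, by simp⟩)))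
      have hez : h z = g z := by
        simp [hh, mul_apply, swap_apply_of_ne_of_ne hga hgb]
      exact ⟨hz1.trans ⟨1, by simp⟩, hz2.trans ⟨1, by simp [hez]⟩⟩
    · rintro z ⟨hz1, hz2⟩
      have hza : z ≠ a := fun he =>
        hax (Equiv.Perm.SameCycle.symm (he ▸ hz1))
      have hzb : z ≠ b := fun he =>
        hbx (Equiv.Perm.SameCycle.symm (he ▸ hz1))
      have hez : h (g⁻¹ z) = z := by
        simp [hh, mul_apply, swap_apply_of_ne_of_ne hza hzb]
      have hinv : h⁻¹ z = g⁻¹ z := by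
        rw [Perm.inv_eq_iff_eq]
        exact hez.symm
      exact ⟨hz1.trans ⟨-1, by simp⟩, hz2.trans ⟨-1, by simp [zpow_neg_one, hinv]⟩⟩
  obtain ⟨i, hi⟩ := hxy
  exact hi ▸ (main i).2

/-- K3: points in the cycle of a (and b) stay attached to a or b. -/
theorem sc_swapMul_orbit (hab : g.SameCycle a b) {x : α} (hax : g.SameCycle a x) :
    (swap a b * g).SameCycle a x ∨ (swap a b * g).SameCycle b x := by
  set h := swap a b * g with hh
  obtain ⟨k, -, hk⟩ := Equiv.Perm.SameCycle.exists_pow_eq' hax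
  clear hax
  subst hk
  induction k with
  | zero => exact Or.inl (by simpa using Equiv.Perm.SameCycle.refl h a)
  | succ k ih =>
    have hstep : (g ^ (k + 1)) a = g ((g ^ k) a) := by
      rw [pow_succ', mul_apply]
    rcases eq_or_ne (g ((g ^ k) a)) a with he | he
    · rw [hstep, he]; exact Or.inl (Equiv.Perm.SameCycle.refl _ _)
    rcases eq_or_ne (g ((g ^ k) a)) b with he2 | he2
    · rw [hstep, he2]; exact Or.inr (Equiv.Perm.SameCycle.refl _ _)
    · have hez : h ((g ^ k) a) = (g ^ (k + 1)) a := by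
        rw [hstep]; simp [hh, mul_apply, swap_apply_of_ne_of_ne he he2]
      have hs : h.SameCycle ((g ^ k) a) ((g ^ (k+1)) a) := ⟨1, by simp [hez]⟩
      rcases ih with h1 | h1
      · exact Or.inl (h1.trans hs)
      · exact Or.inr (h1.trans hs)

/-- reduce integer powers modulo a period -/
theorem period_reduce (f : Perm α) {x : α} {k : ℕ} (hk : 0 < k) (hfix : (f ^ k) x = x)
    (i : ℤ) : ∃ j : ℕ, j < k ∧ (f ^ i) x = (f ^ j) x := by
  have hk' : (0 : ℤ) < (k : ℤ) := by exact_mod_cast hk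
  refine ⟨(i % (k : ℤ)).toNat, ?_, ?_⟩
  · have h1 := Int.emod_lt_of_pos i hk'
    have h0 := Int.emod_nonneg i (ne_of_gt hk')
    rw [Int.toNat_lt h0]
    exact h1
  · have h0 := Int.emod_nonneg i (ne_of_gt hk')
    have hsplit : i = i % (k : ℤ) + (k : ℤ) * (i / (k : ℤ)) := (Int.emod_add_mul_ediv i k).symm
    have hfix' : ∀ q : ℤ, ((f ^ (k : ℤ)) ^ q) x = x := by
      intro q
      have : (f ^ (k : ℤ)) x = x := by rw [zpow_natCast]; exact hfix
      exact Equiv.Perm.zpow_apply_eq_self_of_apply_eq_self this q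
    calc (f ^ i) x = (f ^ (i % (k : ℤ)) * (f ^ (k : ℤ)) ^ (i / (k : ℤ))) x := by
          rw [← zpow_mul, ← zpow_add, ← hsplit]
      _ = (f ^ (i % (k : ℤ))) (((f ^ (k : ℤ)) ^ (i / (k : ℤ))) x) := mul_apply _ _ _
      _ = (f ^ (i % (k : ℤ))) x := by rw [hfix']
      _ = (f ^ (i % (k : ℤ)).toNat) x := by
          rw [← zpow_natCast f (i % (k : ℤ)).toNat, Int.toNat_of_nonneg h0]


theorem exists_period (g : Perm α) (x : α) : ∃ k : ℕ, 0 < k ∧ (g ^ k) x = x :=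
  ⟨orderOf g, orderOf_pos g, by rw [pow_orderOf_eq_one]; rfl⟩

/-- K4: multiplying by a swap joining two different cycles merges them. -/
theorem sc_swapMul_of_not_sc (hab : ¬ g.SameCycle a b) :
    (swap a b * g).SameCycle a b := by
  classical
  set h := swap a b * g with hh
  have hex : ∃ k : ℕ, 0 < k ∧ (g ^ k) a = a := exists_period g a
  have hspec := Nat.find_spec hex
  have hmin : ∀ j, j < Nat.find hex → ¬(0 < j ∧ (g ^ j) a = a) :=
    fun j hj => Nat.find_min hex hj
  generalize hgen : Nat.find hex = k at hspec hmin
  obtain ⟨hk0, hka⟩ := hspec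
  have claim : ∀ j, j < k → (h ^ j) a = (g ^ j) a := by
    intro j
    induction j with
    | zero => simp
    | succ j ih =>
      intro hjk
      have hj' : (h ^ j) a = (g ^ j) a := ih (by omega)
      have hna : (g ^ (j + 1)) a ≠ a := fun he => hmin (j+1) hjk ⟨by omega, he⟩
      have hnb : (g ^ (j + 1)) a ≠ b := fun he => hab ⟨(j+1 : ℕ), by rw [zpow_natCast]; exact he⟩
      rw [pow_succ', mul_apply, hj', hh, mul_apply,
        ← mul_apply g (g ^ j), ← pow_succ', swap_apply_of_ne_of_ne hna hnb]
  have hfin : (h ^ k) a = b := by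
    obtain ⟨k', hke⟩ : ∃ k', k = k' + 1 := ⟨k - 1, by omega⟩
    rw [hke] at hka ⊢
    rw [pow_succ', mul_apply, claim k' (by omega), hh, mul_apply,
      ← mul_apply g (g ^ k'), ← pow_succ', hka, swap_apply_left]
  exact ⟨(k : ℤ), by rw [zpow_natCast]; exact hfin⟩

/-- K2: multiplying by a swap inside one cycle disconnects a from b. -/
theorem not_sc_swapMul_of_sc (hne : a ≠ b) (hab : g.SameCycle a b) :
    ¬ (swap a b * g).SameCycle a b := by
  classical
  set h := swap a b * g with hh
  have hex : ∃ k : ℕ, 0 < k ∧ ((g ^ k) a = a ∨ (g ^ k) a = b) := by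
    obtain ⟨k, hk0, hk⟩ := exists_period g a
    exact ⟨k, hk0, Or.inl hk⟩
  have hspec := Nat.find_spec hex
  have hmin : ∀ j, j < Nat.find hex → ¬(0 < j ∧ ((g ^ j) a = a ∨ (g ^ j) a = b)) :=
    fun j hj => Nat.find_min hex hj
  generalize hgen : Nat.find hex = k at hspec hmin
  obtain ⟨hk0, hka⟩ := hspec
  have claim : ∀ j, j < k → (h ^ j) a = (g ^ j) a := by
    intro j
    induction j with
    | zero => simp
    | succ j ih =>
      intro hjk
      have hj' : (h ^ j) a = (g ^ j) a := ih (by omega)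
      have hna : (g ^ (j + 1)) a ≠ a := fun he => hmin (j+1) hjk ⟨by omega, Or.inl he⟩
      have hnb : (g ^ (j + 1)) a ≠ b := fun he => hmin (j+1) hjk ⟨by omega, Or.inr he⟩
      rw [pow_succ', mul_apply, hj', hh, mul_apply,
        ← mul_apply g (g ^ j), ← pow_succ', swap_apply_of_ne_of_ne hna hnb]
  -- b is not of the form (g ^ j) a for j < k
  have hbnot : ∀ j, j < k → (g ^ j) a ≠ b := by
    intro j hj he
    rcases Nat.eq_zero_or_pos j with rfl | hj0
    · exact hne (by simpa using he)
    · exact hmin j hj ⟨hj0, Or.inr he⟩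
  rintro ⟨i, hi⟩
  rcases hka with hka | hka
  · -- case: a returns to a before meeting b : contradicts hab
    obtain ⟨i', hi'⟩ := hab
    obtain ⟨j, hjk, hje⟩ := period_reduce g hk0 hka i'
    exact hbnot j hjk (by rw [← hje]; exact hi')
  · -- case: (g ^ k) a = b, so (h ^ k) a = a and the h-orbit of a misses b
    have hfin : (h ^ k) a = a := by
      obtain ⟨k', hke⟩ : ∃ k', k = k' + 1 := ⟨k - 1, by omega⟩
      rw [hke] at hka ⊢
      rw [pow_succ', mul_apply, claim k' (by omega), hh, mul_apply,
        ← mul_apply g (g ^ k'), ← pow_succ', hka, swap_apply_right]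
    obtain ⟨j, hjk, hje⟩ := period_reduce h hk0 hfin i
    rw [hje, claim j hjk] at hi
    exact hbnot j hjk hi

/-- Splitting: a swap inside a cycle increases the cycle count by one. -/
theorem cyc_swapMul_split (hne : a ≠ b) (hab : g.SameCycle a b) :
    cyc (swap a b * g) = cyc g + 1 := by
  refine add1 (a := a) (b := b) (fun x y h => sc_of_swapMul hab h)
    (not_sc_swapMul_of_sc hne hab) hab ?_
  intro x y hxy
  by_cases hax : g.SameCycle a x
  · have hay : g.SameCycle a y := hax.trans hxy
    rcases sc_swapMul_orbit hab hax with h1 | h1 <;>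
      rcases sc_swapMul_orbit hab hay with h2 | h2
    · exact Or.inl (h1.symm.trans h2)
    · exact Or.inr (Or.inl ⟨h1.symm, h2.symm⟩)
    · exact Or.inr (Or.inr ⟨h1.symm, h2.symm⟩)
    · exact Or.inl (h1.symm.trans h2)
  · have hbx : ¬ g.SameCycle b x := fun h => hax (hab.trans h)
    exact Or.inl (sc_swapMul_of_sc hax hbx hxy)

/-- Merging: a swap joining two cycles decreases the cycle count by one. -/
theorem cyc_swapMul_merge (hne : a ≠ b) (hab : ¬ g.SameCycle a b) :
    cyc (swap a b * g) + 1 = cyc g := by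
  have h1 : (swap a b * g).SameCycle a b := sc_swapMul_of_not_sc hab
  have h2 := cyc_swapMul_split hne h1
  rw [← mul_assoc, swap_mul_self, one_mul] at h2
  exact h2.symm

end Swap

theorem cyc_one : cyc (1 : Perm α) = Nat.card α := by
  refine (Nat.card_eq_of_bijective (Quotient.mk (scSetoid (1 : Perm α))) ⟨?_, ?_⟩).symm
  · intro x y h
    exact Equiv.Perm.sameCycle_one.mp (Quotient.exact h)
  · exact fun q => Quotient.exists_rep q

theorem cyc_le (g : Perm α) : cyc g ≤ Nat.card α :=
  Nat.card_le_card_of_surjective (Quotient.mk (scSetoid g)) (fun q => Quotient.exists_rep q)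


section Lists

variable [DecidableEq α]

/-- product of the swaps determined by a list of pairs -/
def ps (L : List (α × α)) : Perm α := (L.map fun p => swap p.1 p.2).prod

@[simp] theorem ps_nil : ps ([] : List (α × α)) = 1 := rfl

@[simp] theorem ps_cons (p : α × α) (L : List (α × α)) :
    ps (p :: L) = swap p.1 p.2 * ps L := by
  simp [ps]

theorem ps_append (A B : List (α × α)) : ps (A ++ B) = ps A * ps B := by
  simp [ps]

/-- Every permutation factors into `n - cyc g` transpositions. -/
theorem exists_factorization (g : Perm α) :
    ∃ L : List (α × α), (∀ p ∈ L, p.1 ≠ p.2) ∧ ps L = g ∧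
      L.length + cyc g = Nat.card α := by
  have H : ∀ m : ℕ, ∀ g : Perm α, Nat.card α - cyc g ≤ m →
      ∃ L : List (α × α), (∀ p ∈ L, p.1 ≠ p.2) ∧ ps L = g ∧
        L.length + cyc g = Nat.card α := by
    intro m
    induction m with
    | zero =>
      intro g hg
      rcases eq_or_ne g 1 with rfl | hne
      · exact ⟨[], by simp, by simp, by simp [cyc_one]⟩
      · obtain ⟨x, hx⟩ : ∃ x, g x ≠ x := by
          by_contra hcon
          push_neg at hcon
          exact hne (Equiv.ext hcon)
        have hsc : g.SameCycle x (g x) := ⟨1, by simp⟩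
        have := cyc_swapMul_split (Ne.symm hx) hsc
        have h2 := cyc_le (swap x (g x) * g)
        have h3 := cyc_le g
        omega
    | succ m ih =>
      intro g hg
      rcases eq_or_ne g 1 with rfl | hne
      · exact ⟨[], by simp, by simp, by simp [cyc_one]⟩
      · obtain ⟨x, hx⟩ : ∃ x, g x ≠ x := by
          by_contra hcon
          push_neg at hcon
          exact hne (Equiv.ext hcon)
        have hsc : g.SameCycle x (g x) := ⟨1, by simp⟩
        have hsplit := cyc_swapMul_split (Ne.symm hx) hsc
        have h2 := cyc_le (swap x (g x) * g)
        obtain ⟨L', hL1, hL2, hL3⟩ := ih (swap x (g x) * g) (by omega)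
        refine ⟨(x, g x) :: L', ?_, ?_, ?_⟩
        · rintro p hp
          rcases List.mem_cons.mp hp with rfl | hp
          · exact Ne.symm hx
          · exact hL1 p hp
        · rw [ps_cons, hL2, ← mul_assoc, swap_mul_self, one_mul]
        · simp only [List.length_cons]
          omega
  exact H (Nat.card α - cyc g) g le_rfl

/-- parity of the cycle count of a product of transpositions -/
theorem cyc_ps_parity (L : List (α × α)) (hL : ∀ p ∈ L, p.1 ≠ p.2) :
    (cyc (ps L) + L.length) % 2 = (Nat.card α) % 2 := by
  induction L with
  | nil => simp [cyc_one]
  | cons p L ih =>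
    have hp : p.1 ≠ p.2 := hL p List.mem_cons_self
    have ih' := ih (fun q hq => hL q (List.mem_cons_of_mem p hq))
    rw [ps_cons]
    by_cases hab : (ps L).SameCycle p.1 p.2
    · have := cyc_swapMul_split hp hab
      simp only [List.length_cons]
      omega
    · have := cyc_swapMul_merge hp hab
      simp only [List.length_cons]
      omega

/-- the relation generated by a list of pairs -/
def lrel (L : List (α × α)) : α → α → Prop := fun x y => (x, y) ∈ L

def lsetoid (L : List (α × α)) : Setoid α := Relation.EqvGen.setoid (lrel L)

noncomputable def comp (L : List (α × α)) : ℕ := Nat.card (Quotient (lsetoid L))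

theorem lrel_mono {L L' : List (α × α)} (h : ∀ p ∈ L, p ∈ L') {x y : α}
    (hxy : Relation.EqvGen (lrel L) x y) : Relation.EqvGen (lrel L') x y :=
  Relation.EqvGen.mono (fun a b hab => h (a, b) hab) _ _ hxy

theorem comp_nil : comp ([] : List (α × α)) = Nat.card α := by
  refine (Nat.card_eq_of_bijective (Quotient.mk (lsetoid ([] : List (α × α)))) ⟨?_, ?_⟩).symm
  · intro x y h
    have hxy : Relation.EqvGen (lrel ([] : List (α × α))) x y := Quotient.exact h
    clear h
    induction hxy with
    | rel _ _ h => exact absurd h List.not_mem_nil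
    | refl => rfl
    | symm _ _ _ ih => exact ih.symm
    | trans _ _ _ _ _ ih1 ih2 => exact ih1.trans ih2
  · exact fun q => Quotient.exists_rep q

/-- the permutation `ps L` moves points within components of `L` -/
theorem lrel_ps (L : List (α × α)) : ∀ z : α, Relation.EqvGen (lrel L) z (ps L z) := by
  induction L with
  | nil => intro z; simpa using Relation.EqvGen.refl z
  | cons p L ih =>
    intro z
    have h1 : Relation.EqvGen (lrel (p :: L)) z (ps L z) :=
      lrel_mono (fun q hq => List.mem_cons_of_mem p hq) (ih z)
    refine h1.trans _ _ _ ?_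
    rw [ps_cons, mul_apply]
    have hrel : Relation.EqvGen (lrel (p :: L)) p.1 p.2 :=
      Relation.EqvGen.rel _ _ List.mem_cons_self
    rcases eq_or_ne (ps L z) p.1 with he | he
    · rw [he, swap_apply_left]; exact he ▸ hrel
    rcases eq_or_ne (ps L z) p.2 with he2 | he2
    · rw [he2, swap_apply_right]; exact he2 ▸ hrel.symm _ _
    · rw [swap_apply_of_ne_of_ne he he2]; exact Relation.EqvGen.refl _

/-- orbits of `ps L` refine the components of `L` -/
theorem lrel_of_sc (L : List (α × α)) {x y : α} (h : (ps L).SameCycle x y) :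
    Relation.EqvGen (lrel L) x y := by
  obtain ⟨i, hi⟩ := h
  rw [← hi]
  refine zpow_closure (ps L) (fun z => Relation.EqvGen (lrel L) x z) ?_ ?_ x
    (Relation.EqvGen.refl x) i
  · exact fun z hz => hz.trans _ _ _ (lrel_ps L z)
  · intro z hz
    have h2 := lrel_ps L ((ps L)⁻¹ z)
    rw [show ∀ (e : Equiv.Perm _) y, e (e⁻¹ y) = y from fun e y => e.apply_symm_apply y] at h2
    exact hz.trans _ _ _ (h2.symm _ _)

theorem comp_cons_of_rel {p : α × α} {L : List (α × α)}
    (h : Relation.EqvGen (lrel L) p.1 p.2) : comp (p :: L) = comp L := by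
  have hiff : ∀ x y : α, Relation.EqvGen (lrel (p :: L)) x y ↔
      Relation.EqvGen (lrel L) x y := by
    intro x y
    constructor
    · intro hxy
      induction hxy with
      | rel u v huv =>
        rcases List.mem_cons.mp huv with he | huv
        · have h1 : u = p.1 := congrArg Prod.fst he
          have h2 : v = p.2 := congrArg Prod.snd he
          rw [h1, h2]; exact h
        · exact Relation.EqvGen.rel _ _ huv
      | refl u => exact Relation.EqvGen.refl u
      | symm _ _ _ ih => exact ih.symm _ _
      | trans _ _ _ _ _ ih1 ih2 => exact ih1.trans _ _ _ ih2
    · exact lrel_mono (fun q hq => List.mem_cons_of_mem p hq)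
  have : lsetoid (p :: L) = lsetoid L := Setoid.ext hiff
  simp only [comp, this]

theorem comp_cons_of_not_rel {p : α × α} {L : List (α × α)}
    (h : ¬ Relation.EqvGen (lrel L) p.1 p.2) : comp L = comp (p :: L) + 1 := by
  refine add1 (s := lsetoid L) (t := lsetoid (p :: L)) (a := p.1) (b := p.2)
    (fun x y hxy => lrel_mono (fun q hq => List.mem_cons_of_mem p hq) hxy) h
    (Relation.EqvGen.rel _ _ (by
      show (p.1, p.2) ∈ p :: L
      rw [Prod.mk.eta]; exact List.mem_cons_self)) ?_
  intro x y hxy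
  have hxy' : Relation.EqvGen (lrel (p :: L)) x y := hxy
  clear hxy
  show Relation.EqvGen (lrel L) x y ∨
    (Relation.EqvGen (lrel L) x p.1 ∧ Relation.EqvGen (lrel L) y p.2) ∨
    (Relation.EqvGen (lrel L) x p.2 ∧ Relation.EqvGen (lrel L) y p.1)
  induction hxy' with
  | rel u v huv =>
    rcases List.mem_cons.mp huv with he | huv
    · have h1 : u = p.1 := congrArg Prod.fst he
      have h2 : v = p.2 := congrArg Prod.snd he
      subst h1; subst h2
      exact Or.inr (Or.inl ⟨Relation.EqvGen.refl _, Relation.EqvGen.refl _⟩)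
    · exact Or.inl (Relation.EqvGen.rel _ _ huv)
  | refl u => exact Or.inl (Relation.EqvGen.refl u)
  | symm u v _ ih =>
    rcases ih with h1 | ⟨h1, h2⟩ | ⟨h1, h2⟩
    · exact Or.inl (h1.symm _ _)
    · exact Or.inr (Or.inr ⟨h2, h1⟩)
    · exact Or.inr (Or.inl ⟨h2, h1⟩)
  | trans u v w _ _ ih1 ih2 =>
    rcases ih1 with h1 | ⟨h1, h2⟩ | ⟨h1, h2⟩ <;>
      rcases ih2 with h3 | ⟨h3, h4⟩ | ⟨h3, h4⟩
    · exact Or.inl (h1.trans _ _ _ h3)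
    · exact Or.inr (Or.inl ⟨h1.trans _ _ _ h3, h4⟩)
    · exact Or.inr (Or.inr ⟨h1.trans _ _ _ h3, h4⟩)
    · exact Or.inr (Or.inl ⟨h1, (h3.symm _ _).trans _ _ _ h2⟩)
    · exact absurd ((h3.symm _ _).trans _ _ _ h2) h
    · exact Or.inl (h1.trans _ _ _ ((h4.symm _ _)))
    · exact Or.inr (Or.inr ⟨h1, (h3.symm _ _).trans _ _ _ h2⟩)
    · exact Or.inl (h1.trans _ _ _ (h4.symm _ _))
    · exact absurd (((h3.symm _ _).trans _ _ _ h2).symm _ _) h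

/-- The fundamental inequality: a product of transpositions that connects `α`
has at least `Nat.card α - 1` factors, in the refined cycle-counting form. -/
theorem main_ineq (L : List (α × α)) (hL : ∀ p ∈ L, p.1 ≠ p.2) :
    cyc (ps L) + Nat.card α ≤ L.length + 2 * comp L := by
  induction L with
  | nil => simp only [ps_nil, cyc_one, comp_nil, List.length_nil]; omega
  | cons p L ih =>
    have hp : p.1 ≠ p.2 := hL p List.mem_cons_self
    have ih' := ih (fun q hq => hL q (List.mem_cons_of_mem p hq))
    rw [ps_cons]
    by_cases hrel : Relation.EqvGen (lrel L) p.1 p.2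
    · have hcomp := comp_cons_of_rel (p := p) hrel
      by_cases hsc : (ps L).SameCycle p.1 p.2
      · have := cyc_swapMul_split hp hsc; simp only [List.length_cons]; omega
      · have := cyc_swapMul_merge hp hsc; simp only [List.length_cons]; omega
    · have hcomp := comp_cons_of_not_rel (p := p) hrel
      have hsc : ¬ (ps L).SameCycle p.1 p.2 := fun h => hrel (lrel_of_sc L h)
      have := cyc_swapMul_merge hp hsc
      simp only [List.length_cons]; omega

end Lists

/-- Euler-type bound for a transitive pair of permutations, with parity. -/
theorem euler (σ ρ : Perm α) [Nonempty α]
    (hconn : ∀ x y : α, ∃ g ∈ Subgroup.closure ({σ, ρ} : Set (Perm α)), g x = y) :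
    cyc ρ + cyc σ + cyc (ρ * σ) ≤ Nat.card α + 2 ∧
      (cyc ρ + cyc σ + cyc (ρ * σ) + Nat.card α) % 2 = 0 := by
  classical
  obtain ⟨A, hA1, hA2, hA3⟩ := exists_factorization ρ
  obtain ⟨B, hB1, hB2, hB3⟩ := exists_factorization σ
  have hLpair : ∀ p ∈ A ++ B, p.1 ≠ p.2 := by
    intro p hp
    rcases List.mem_append.mp hp with h | h
    exacts [hA1 p h, hB1 p h]
  have hps : ps (A ++ B) = ρ * σ := by rw [ps_append, hA2, hB2]
  have hstepρ : ∀ x : α, Relation.EqvGen (lrel (A ++ B)) x (ρ x) := by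
    intro x
    have h1 := lrel_ps A x
    rw [hA2] at h1
    exact lrel_mono (fun q hq => List.mem_append_left B hq) h1
  have hstepσ : ∀ x : α, Relation.EqvGen (lrel (A ++ B)) x (σ x) := by
    intro x
    have h1 := lrel_ps B x
    rw [hB2] at h1
    exact lrel_mono (fun q hq => List.mem_append_right A hq) h1
  have hP : ∀ g ∈ Subgroup.closure ({σ, ρ} : Set (Perm α)),
      ∀ x : α, Relation.EqvGen (lrel (A ++ B)) x (g x) := by
    intro g hg
    induction hg using Subgroup.closure_induction with
    | mem g hgmem =>
      simp only [Set.mem_insert_iff, Set.mem_singleton_iff] at hgmem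
      rcases hgmem with rfl | rfl
      · exact hstepσ
      · exact hstepρ
    | one => intro x; simpa using Relation.EqvGen.refl x
    | mul g g' hg hg' ihg ihg' =>
      intro x
      have h1 := ihg' x
      have h2 := ihg (g' x)
      rw [mul_apply]
      exact h1.trans _ _ _ h2
    | inv g hg ihg =>
      intro x
      have h2 := ihg (g⁻¹ x)
      rw [show ∀ (e : Equiv.Perm _) y, e (e⁻¹ y) = y from fun e y => e.apply_symm_apply y] at h2
      exact h2.symm _ _
  have htot : ∀ x y : α, Relation.EqvGen (lrel (A ++ B)) x y := by
    intro x y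
    obtain ⟨g, hg, hgx⟩ := hconn x y
    rw [← hgx]
    exact hP g hg x
  have hcomp : comp (A ++ B) = 1 := by
    rw [comp, Nat.card_eq_one_iff_unique]
    constructor
    · constructor
      intro c1 c2
      induction c1 using Quotient.ind
      induction c2 using Quotient.ind
      exact Quotient.sound (htot _ _)
    · exact Nonempty.map (Quotient.mk _) (by infer_instance)
  have hineq := main_ineq (A ++ B) hLpair
  have hpar := cyc_ps_parity (A ++ B) hLpair
  rw [hps, hcomp] at hineq
  rw [hps] at hpar
  have hlen : (A ++ B).length = A.length + B.length := List.length_append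
  constructor <;> omega

/-- counting a finite type by the fibers of a map -/
theorem card_fiber_sum {β γ : Type} [Finite β] [Fintype γ] (f : β → γ) :
    Nat.card β = ∑ c : γ, Nat.card {x : β // f x = c} := by
  classical
  letI : Fintype β := Fintype.ofFinite β
  calc Nat.card β = Fintype.card β := Nat.card_eq_fintype_card
    _ = Fintype.card (Σ c : γ, {x : β // f x = c}) :=
        (Fintype.card_congr (Equiv.sigmaFiberEquiv f)).symm
    _ = ∑ c : γ, Fintype.card {x : β // f x = c} := Fintype.card_sigma
    _ = ∑ c : γ, Nat.card {x : β // f x = c} := by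
        simp only [Nat.card_eq_fintype_card]

section MapPart

open CombMap

variable (M : CombMap)

theorem sigma_mul_self : M.σ * M.σ = 1 := Equiv.ext fun d => M.σ_invol d

theorem sigma_inv : M.σ⁻¹ = M.σ := inv_eq_of_mul_eq_one_left (sigma_mul_self M)

theorem sigma_zpow (i : ℤ) : M.σ ^ i = 1 ∨ M.σ ^ i = M.σ := by
  induction i using Int.induction_on with
  | zero => exact Or.inl rfl
  | succ k ih =>
    rw [zpow_add, zpow_one]
    rcases ih with h | h
    · rw [h, one_mul]; exact Or.inr rfl
    · rw [h, sigma_mul_self]; exact Or.inl rfl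
  | pred k ih =>
    rw [sub_eq_add_neg, zpow_add, zpow_neg_one, sigma_inv]
    rcases ih with h | h
    · rw [h, one_mul]; exact Or.inr rfl
    · rw [h, sigma_mul_self]; exact Or.inl rfl

theorem sc_sigma {x y : M.D} : M.σ.SameCycle x y ↔ x = y ∨ x = M.σ y := by
  constructor
  · rintro ⟨i, hi⟩
    rcases sigma_zpow M i with h | h
    · rw [h, Perm.one_apply] at hi; exact Or.inl hi
    · rw [h] at hi
      refine Or.inr ?_
      rw [← hi, M.σ_invol]
  · rintro (rfl | rfl)
    · exact Equiv.Perm.SameCycle.refl _ _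
    · exact ⟨1, by rw [zpow_one]; exact M.σ_invol y⟩

theorem edg_eq_iff {d d' : M.D} : M.edg d = M.edg d' ↔ d = d' ∨ d = M.σ d' :=
  ⟨fun h => (sc_sigma M).mp (Quotient.exact h),
   fun h => Quotient.sound ((sc_sigma M).mpr h)⟩

theorem fce_phi (x : M.D) : M.fce (M.φ x) = M.fce x :=
  Quotient.sound ⟨-1, by rw [zpow_neg_one]; exact Equiv.symm_apply_apply _ _⟩

theorem n_eq_two_nE : Nat.card M.D = 2 * M.nE := by
  classical
  letI : Fintype M.Edge := Fintype.ofFinite _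
  rw [card_fiber_sum M.edg]
  have hfib : ∀ e : M.Edge, Nat.card {x : M.D // M.edg x = e} = 2 := by
    intro e
    obtain ⟨d0, hd0⟩ := Quotient.exists_rep e
    have hd0' : M.edg d0 = e := hd0
    have hset : {x : M.D | M.edg x = e} = {d0, M.σ d0} := by
      ext x
      simp only [Set.mem_setOf_eq, Set.mem_insert_iff, Set.mem_singleton_iff]
      rw [← hd0']
      exact edg_eq_iff M
    calc Nat.card {x : M.D // M.edg x = e}
        = Set.ncard {x : M.D | M.edg x = e} := Nat.card_coe_set_eq _
      _ = Set.ncard ({d0, M.σ d0} : Set M.D) := by rw [hset]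
      _ = 2 := Set.ncard_pair (Ne.symm (M.σ_fixfree d0))
  simp only [hfib, Finset.sum_const, Finset.card_univ, smul_eq_mul]
  rw [CombMap.nE, Nat.card_eq_fintype_card, mul_comm]

theorem face_three (hs : M.Simple) (hd : M.DualLoopFree) (f : M.Face) :
    3 ≤ M.faceSize f := by
  classical
  obtain ⟨d, hd0⟩ := Quotient.exists_rep f
  have hd0' : M.fce d = f := hd0
  have hphi : ∀ x : M.D, M.φ x = M.ρ (M.σ x) := fun x => rfl
  have hne1 : M.φ d ≠ d := by
    intro he
    have hsd : (M.ρ ^ (-1 : ℤ)) d = M.σ d := by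
      rw [zpow_neg_one]
      have h5 := congrArg (fun z => M.ρ⁻¹ z) he
      simp only [hphi, show ∀ (e : Equiv.Perm M.D) y, e⁻¹ (e y) = y from fun e y => e.symm_apply_apply y] at h5
      exact h5.symm
    exact hs.1 d (Quotient.sound ⟨-1, hsd⟩)
  have hne2 : M.φ (M.φ d) ≠ d := by
    intro h2
    have e1 : M.vtx (M.σ d) = M.vtx (M.φ d) :=
      Quotient.sound ⟨1, by rw [zpow_one]; exact (hphi d).symm⟩
    have e2 : M.vtx (M.σ (M.φ d)) = M.vtx d :=
      Quotient.sound ⟨1, by rw [zpow_one, ← hphi (M.φ d)]; exact h2⟩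
    have hedg : M.edg d = M.edg (M.σ (M.φ d)) := by
      refine hs.2 d (M.σ (M.φ d)) e2.symm ?_
      rw [M.σ_invol]
      exact e1
    rcases (edg_eq_iff M).mp hedg with he | he
    · -- d = σ (φ d), so σ d = φ d, contradicting dual-loop-freeness
      have hsd : M.σ d = M.φ d := by
        have h6 := congrArg M.σ he
        rwa [M.σ_invol] at h6
      exact hd d (by rw [hsd, fce_phi])
    · -- d = σ (σ (φ d)) = φ d
      rw [M.σ_invol] at he
      exact hne1 he.symm
  have hne3 : M.φ (M.φ d) ≠ M.φ d := fun he => hne1 (M.φ.injective he)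
  have hsub : ({d, M.φ d, M.φ (M.φ d)} : Set M.D) ⊆ {x : M.D | M.fce x = f} := by
    rintro x (rfl | rfl | rfl)
    · exact hd0'
    · rw [Set.mem_setOf_eq, fce_phi]; exact hd0'
    · rw [Set.mem_setOf_eq, fce_phi, fce_phi]; exact hd0'
  have h1 : Set.ncard ({d, M.φ d, M.φ (M.φ d)} : Set M.D) = 3 := by
    rw [Set.ncard_insert_of_notMem (by simp [Ne.symm hne1, Ne.symm hne2]),
      Set.ncard_pair hne3.symm]
  calc (3 : ℕ) = Set.ncard ({d, M.φ d, M.φ (M.φ d)} : Set M.D) := h1.symm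
    _ ≤ Set.ncard {x : M.D | M.fce x = f} := Set.ncard_le_ncard hsub (Set.toFinite _)
    _ = Nat.card {x : M.D // M.fce x = f} := (Nat.card_coe_set_eq _).symm
    _ = M.faceSize f := rfl

theorem nF_ge (hd : M.DualLoopFree) (fe : M.Face)
    (hnbrs : Nat.card {f : M.Face // M.FaceAdj fe f} = 6) : 7 ≤ M.nF := by
  classical
  have hfe : ¬ M.FaceAdj fe fe := by
    rintro ⟨dd, h1, h2⟩
    exact hd dd (h1.trans h2.symm)
  have hsplit : M.nF =
      Nat.card {f : M.Face // M.FaceAdj fe f} +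
        Nat.card {f : M.Face // ¬ M.FaceAdj fe f} := by
    rw [CombMap.nF, ← Nat.card_sum]
    exact Nat.card_congr (Equiv.sumCompl _).symm
  haveI : Nonempty {f : M.Face // ¬ M.FaceAdj fe f} := ⟨⟨fe, hfe⟩⟩
  have hpos : 0 < Nat.card {f : M.Face // ¬ M.FaceAdj fe f} := Nat.card_pos
  omega

theorem n_ge (fe : M.Face) (hfe : M.faceSize fe = 6)
    (h3 : ∀ f : M.Face, 3 ≤ M.faceSize f) :
    6 + 3 * (M.nF - 1) ≤ Nat.card M.D := by
  classical
  letI : Fintype M.Face := Fintype.ofFinite _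
  rw [card_fiber_sum M.fce]
  have hfsum : ∀ f : M.Face, Nat.card {x : M.D // M.fce x = f} = M.faceSize f :=
    fun _ => rfl
  simp only [hfsum]
  rw [← Finset.sum_erase_add _ _ (Finset.mem_univ fe), hfe]
  have hb : (Finset.univ.erase fe).card * 3 ≤ ∑ f ∈ Finset.univ.erase fe, M.faceSize f := by
    have h7 := Finset.card_nsmul_le_sum (Finset.univ.erase fe) M.faceSize 3
      (fun f _ => h3 f)
    simpa [smul_eq_mul] using h7
  have hcard : (Finset.univ.erase fe).card = M.nF - 1 := by
    rw [Finset.card_erase_of_mem (Finset.mem_univ fe), Finset.card_univ,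
      CombMap.nF, Nat.card_eq_fintype_card]
  omega

theorem nE_le (hs : M.Simple) : M.nE ≤ (M.nV).choose 2 := by
  classical
  letI : Fintype M.Vertex := Fintype.ofFinite _
  have hwd : ∀ x y : M.D, M.σ.SameCycle x y →
      s(M.vtx x, M.vtx (M.σ x)) = s(M.vtx y, M.vtx (M.σ y)) := by
    intro x y hxy
    rcases (sc_sigma M).mp hxy with rfl | rfl
    · rfl
    · rw [M.σ_invol]; exact Sym2.eq_swap
  let emap : M.Edge → Sym2 M.Vertex :=
    Quotient.lift (fun x => s(M.vtx x, M.vtx (M.σ x))) (fun x y h => hwd x y h)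
  have hdiag : ∀ e : M.Edge, ¬ (emap e).IsDiag := by
    intro e
    induction e using Quotient.ind
    rename_i x
    exact fun h => hs.1 x (Sym2.mk_isDiag_iff.mp h)
  have hinj : Function.Injective
      (fun e : M.Edge => (⟨emap e, hdiag e⟩ : {z : Sym2 M.Vertex // ¬ z.IsDiag})) := by
    intro e1 e2 h
    have h' : emap e1 = emap e2 := congrArg Subtype.val h
    induction e1 using Quotient.ind
    induction e2 using Quotient.ind
    rename_i x y
    have h2 : s(M.vtx x, M.vtx (M.σ x)) = s(M.vtx y, M.vtx (M.σ y)) := h'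
    rw [Sym2.eq_iff] at h2
    rcases h2 with ⟨ha, hb⟩ | ⟨ha, hb⟩
    · exact hs.2 x y ha hb
    · have h4 : M.edg x = M.edg (M.σ y) := by
        refine hs.2 x (M.σ y) ha ?_
        rw [M.σ_invol]
        exact hb
      have h5 : M.edg (M.σ y) = M.edg y := (edg_eq_iff M).mpr (Or.inr rfl)
      exact h4.trans h5
  calc M.nE = Nat.card M.Edge := rfl
    _ ≤ Nat.card {z : Sym2 M.Vertex // ¬ z.IsDiag} :=
        Nat.card_le_card_of_injective _ hinj
    _ = (Fintype.card M.Vertex).choose 2 := by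
        rw [Nat.card_eq_fintype_card, Sym2.card_subtype_not_diag]
    _ = (M.nV).choose 2 := by rw [CombMap.nV, Nat.card_eq_fintype_card]

end MapPart

end SixCircuitAux

/-- Every empty 6-circuit whose spanning 6-face `f_e` neighbours 6 pairwise different
faces has exactly 6 vertices and at least 13 edges. -/
theorem empty_six_circuit_vertices_edges
    (M : CombMap) (fe : M.Face)
    (hcirc : M.IsEmptyCircuit 6 fe)
    (hnbrs : Nat.card {f : M.Face // M.FaceAdj fe f} = 6) :
    M.nV = 6 ∧ 13 ≤ M.nE := by
  classical
  obtain ⟨hV6, hfesize, hspan, hsimple, hdual, hmulti⟩ := hcirc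
  obtain ⟨d0, -⟩ := Quotient.exists_rep fe
  haveI : Nonempty M.D := ⟨d0⟩
  have heuler := SixCircuitAux.euler M.σ M.ρ M.conn
  have heu1 : M.nV + M.nE + M.nF ≤ Nat.card M.D + 2 := heuler.1
  have heu2 : (M.nV + M.nE + M.nF + Nat.card M.D) % 2 = 0 := heuler.2
  clear heuler
  obtain ⟨m, hm⟩ : Even (M.nV + M.nE + M.nF + Nat.card M.D) := Nat.even_iff.mpr heu2
  clear heu2
  have h2E : Nat.card M.D = 2 * M.nE := SixCircuitAux.n_eq_two_nE M
  have h3 : ∀ f : M.Face, 3 ≤ M.faceSize f := SixCircuitAux.face_three M hsimple hdual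
  have hF : 7 ≤ M.nF := SixCircuitAux.nF_ge M hdual fe hnbrs
  have hsum : 6 + 3 * (M.nF - 1) ≤ Nat.card M.D := SixCircuitAux.n_ge M fe hfesize h3
  have hEle : M.nE ≤ (M.nV).choose 2 := SixCircuitAux.nE_le M hsimple
  rw [Nat.choose_two_right] at hEle
  set V := M.nV with hV
  clear_value V
  set E := M.nE with hE
  clear_value E
  rcases Nat.lt_or_ge E 13 with hE13 | hE13
  · interval_cases V <;> interval_cases E <;> omega
  · interval_cases V <;> omega
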